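/- Let Ξ = {ξ ∈ ℝ³ : ξ ≥ 0, ξ₁ + ξ₂ + ξ₃ = 1} and Y = {(0,0,0), (1,1,0), (0,1,1), (1,0,0), (0,1,0), (0,0,1)} ⊆ {0,1}³. For w = (1,0,0), define Ξ(w, ξ̄) = {ξ ∈ Ξ : ξ₁ = ξ̄₁}. Then min_{ξ̄ ∈ Ξ} max_{y ∈ Y} min_{ξ ∈ Ξ(w, ξ̄)} ξᵀy = 1/2. -/

import Mathlib

namespace Stmt13Aux

def Feas (ξ : Fin 3 → ℝ) : Prop := (∀ i, 0 ≤ ξ i) ∧ (∑ i, ξ i) = 1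

def Inn (ξb y : Fin 3 → ℝ) : Set ℝ :=
  {c | ∃ ξ : Fin 3 → ℝ, ((∀ i, 0 ≤ ξ i) ∧ (∑ i, ξ i) = 1) ∧
    ξ 0 = ξb 0 ∧ c = ∑ i, ξ i * y i}

def Yset : Set (Fin 3 → ℝ) :=
  ({![0,0,0], ![1,1,0], ![0,1,1], ![1,0,0], ![0,1,0], ![0,0,1]} : Set (Fin 3 → ℝ))

def T (ξb : Fin 3 → ℝ) : Set ℝ := {u | ∃ y ∈ Yset, u = sInf (Inn ξb y)}

lemma y_bounds {y : Fin 3 → ℝ} (hy : y ∈ Yset) : ∀ i, 0 ≤ y i ∧ y i ≤ 1 := by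
  simp only [Yset, Set.mem_insert_iff, Set.mem_singleton_iff] at hy
  rcases hy with h|h|h|h|h|h <;> subst h <;> intro i <;> fin_cases i <;> norm_num

lemma inn_bddBelow {ξb y : Fin 3 → ℝ} (hy : y ∈ Yset) : (0 : ℝ) ∈ lowerBounds (Inn ξb y) := by
  rintro c ⟨ξ, ⟨hpos, _⟩, _, rfl⟩
  exact Finset.sum_nonneg fun i _ => mul_nonneg (hpos i) (y_bounds hy i).1

lemma inn_self_mem {ξb : Fin 3 → ℝ} (hb : Feas ξb) (y : Fin 3 → ℝ) :
    (∑ i, ξb i * y i) ∈ Inn ξb y := ⟨ξb, hb, rfl, rfl⟩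

lemma T_bddAbove {ξb : Fin 3 → ℝ} (hb : Feas ξb) : (1 : ℝ) ∈ upperBounds (T ξb) := by
  rintro u ⟨y, hy, rfl⟩
  have h1 : sInf (Inn ξb y) ≤ ∑ i, ξb i * y i :=
    csInf_le ⟨0, inn_bddBelow hy⟩ (inn_self_mem hb y)
  have h2 : ∑ i, ξb i * y i ≤ ∑ i, ξb i := by
    apply Finset.sum_le_sum
    intro i _
    calc ξb i * y i ≤ ξb i * 1 := mul_le_mul_of_nonneg_left (y_bounds hy i).2 (hb.1 i)
    _ = ξb i := mul_one _
  linarith [hb.2]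

lemma T_low {ξb : Fin 3 → ℝ} (hb : Feas ξb) : 1/2 ≤ sSup (T ξb) := by
  have ha0 : 0 ≤ ξb 0 := hb.1 0
  have hsum : ξb 0 + ξb 1 + ξb 2 = 1 := by
    have := hb.2; rwa [Fin.sum_univ_three] at this
  have hbdd : BddAbove (T ξb) := ⟨1, T_bddAbove hb⟩
  rcases le_or_gt (1/2 : ℝ) (ξb 0) with h | h
  · -- use y = ![1,0,0]
    have hy : (![1,0,0] : Fin 3 → ℝ) ∈ Yset := by simp [Yset]
    have hmem : sInf (Inn ξb ![1,0,0]) ∈ T ξb := ⟨_, hy, rfl⟩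
    have hge : 1/2 ≤ sInf (Inn ξb ![1,0,0]) := by
      apply le_csInf ⟨_, inn_self_mem hb _⟩
      rintro c ⟨ξ, ⟨hpos, hs⟩, h0, rfl⟩
      rw [Fin.sum_univ_three]
      simp only [Matrix.cons_val_zero, Matrix.cons_val_one, Matrix.head_cons,
        Matrix.cons_val_two, Matrix.tail_cons]
      rw [h0]; linarith
    exact hge.trans (le_csSup hbdd hmem)
  · -- use y = ![0,1,1]
    have hy : (![0,1,1] : Fin 3 → ℝ) ∈ Yset := by simp [Yset]
    have hmem : sInf (Inn ξb ![0,1,1]) ∈ T ξb := ⟨_, hy, rfl⟩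
    have hge : 1/2 ≤ sInf (Inn ξb ![0,1,1]) := by
      apply le_csInf ⟨_, inn_self_mem hb _⟩
      rintro c ⟨ξ, ⟨hpos, hs⟩, h0, rfl⟩
      rw [Fin.sum_univ_three]
      have hs' : ξ 0 + ξ 1 + ξ 2 = 1 := by rwa [Fin.sum_univ_three] at hs
      simp only [Matrix.cons_val_zero, Matrix.cons_val_one, Matrix.head_cons,
        Matrix.cons_val_two, Matrix.tail_cons]
      rw [h0] at hs'; linarith
    exact hge.trans (le_csSup hbdd hmem)

noncomputable def ξstar : Fin 3 → ℝ := ![1/2, 1/2, 0]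

lemma ξstar_feas : Feas ξstar := by
  constructor
  · intro i; fin_cases i <;> norm_num [ξstar]
  · rw [Fin.sum_univ_three]; norm_num [ξstar, Matrix.cons_val_two, Matrix.tail_cons, Matrix.head_cons]

noncomputable def ξalt : Fin 3 → ℝ := ![1/2, 0, 1/2]

lemma ξalt_feas_cond : ((∀ i, 0 ≤ ξalt i) ∧ (∑ i, ξalt i) = 1) ∧ ξalt 0 = ξstar 0 := by
  refine ⟨⟨?_, ?_⟩, ?_⟩
  · intro i; fin_cases i <;> norm_num [ξalt]
  · rw [Fin.sum_univ_three]; norm_num [ξalt, Matrix.cons_val_two, Matrix.tail_cons, Matrix.head_cons]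
  · norm_num [ξalt, ξstar]

lemma T_up : ∀ u ∈ T ξstar, u ≤ 1/2 := by
  rintro u ⟨y, hy, rfl⟩
  have hy' := hy
  simp only [Yset, Set.mem_insert_iff, Set.mem_singleton_iff] at hy'
  have key : ∀ c ∈ Inn ξstar y, sInf (Inn ξstar y) ≤ c :=
    fun c hc => csInf_le ⟨0, inn_bddBelow hy⟩ hc
  have keyalt : ∀ c ∈ Inn ξstar y, sInf (Inn ξstar y) ≤ c := key
  rcases hy' with h|h|h|h|h|h <;> subst h
  · have h2 := key _ (inn_self_mem ξstar_feas ![0,0,0])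
    have hc : (∑ i, ξstar i * (![0,0,0] : Fin 3 → ℝ) i) = 0 := by
      rw [Fin.sum_univ_three]; norm_num [ξstar, Matrix.cons_val_two, Matrix.tail_cons, Matrix.head_cons]
    rw [hc] at h2; linarith
  · have h2 := key _ (⟨ξalt, ξalt_feas_cond.1, ξalt_feas_cond.2, rfl⟩ :
      (∑ i, ξalt i * (![1,1,0] : Fin 3 → ℝ) i) ∈ Inn ξstar ![1,1,0])
    have hc : (∑ i, ξalt i * (![1,1,0] : Fin 3 → ℝ) i) = 1/2 := by
      rw [Fin.sum_univ_three]; norm_num [ξalt, Matrix.cons_val_two, Matrix.tail_cons, Matrix.head_cons]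
    rw [hc] at h2; linarith
  · have h2 := key _ (inn_self_mem ξstar_feas ![0,1,1])
    have hc : (∑ i, ξstar i * (![0,1,1] : Fin 3 → ℝ) i) = 1/2 := by
      rw [Fin.sum_univ_three]; norm_num [ξstar, Matrix.cons_val_two, Matrix.tail_cons, Matrix.head_cons]
    rw [hc] at h2; linarith
  · have h2 := key _ (inn_self_mem ξstar_feas ![1,0,0])
    have hc : (∑ i, ξstar i * (![1,0,0] : Fin 3 → ℝ) i) = 1/2 := by
      rw [Fin.sum_univ_three]; norm_num [ξstar, Matrix.cons_val_two, Matrix.tail_cons, Matrix.head_cons]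
    rw [hc] at h2; linarith
  · have h2 := key _ (⟨ξalt, ξalt_feas_cond.1, ξalt_feas_cond.2, rfl⟩ :
      (∑ i, ξalt i * (![0,1,0] : Fin 3 → ℝ) i) ∈ Inn ξstar ![0,1,0])
    have hc : (∑ i, ξalt i * (![0,1,0] : Fin 3 → ℝ) i) = 0 := by
      rw [Fin.sum_univ_three]; norm_num [ξalt, Matrix.cons_val_two, Matrix.tail_cons, Matrix.head_cons]
    rw [hc] at h2; linarith
  · have h2 := key _ (inn_self_mem ξstar_feas ![0,0,1])
    have hc : (∑ i, ξstar i * (![0,0,1] : Fin 3 → ℝ) i) = 0 := by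
      rw [Fin.sum_univ_three]; norm_num [ξstar, Matrix.cons_val_two, Matrix.tail_cons, Matrix.head_cons]
    rw [hc] at h2; linarith

lemma T_star_eq : sSup (T ξstar) = 1/2 := by
  apply le_antisymm
  · have hne : (T ξstar).Nonempty := ⟨_, ![0,0,0], by simp [Yset], rfl⟩
    exact csSup_le hne T_up
  · exact T_low ξstar_feas

end Stmt13Aux

open Stmt13Aux in
theorem stmt13 :
    sInf {v | ∃ ξb : Fin 3 → ℝ, ((∀ i, 0 ≤ ξb i) ∧ (∑ i, ξb i) = 1) ∧
      v = sSup {u | ∃ y ∈ ({![0,0,0], ![1,1,0], ![0,1,1], ![1,0,0], ![0,1,0], ![0,0,1]} :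
          Set (Fin 3 → ℝ)),
        u = sInf {c | ∃ ξ : Fin 3 → ℝ, ((∀ i, 0 ≤ ξ i) ∧ (∑ i, ξ i) = 1) ∧
          ξ 0 = ξb 0 ∧ c = ∑ i, ξ i * y i}}} = 1 / 2 := by
  have hset : {v | ∃ ξb : Fin 3 → ℝ, ((∀ i, 0 ≤ ξb i) ∧ (∑ i, ξb i) = 1) ∧
      v = sSup {u | ∃ y ∈ ({![0,0,0], ![1,1,0], ![0,1,1], ![1,0,0], ![0,1,0], ![0,0,1]} :
          Set (Fin 3 → ℝ)),
        u = sInf {c | ∃ ξ : Fin 3 → ℝ, ((∀ i, 0 ≤ ξ i) ∧ (∑ i, ξ i) = 1) ∧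
          ξ 0 = ξb 0 ∧ c = ∑ i, ξ i * y i}}}
      = {v | ∃ ξb : Fin 3 → ℝ, Feas ξb ∧ v = sSup (T ξb)} := rfl
  rw [hset]
  have hmem : (1/2 : ℝ) ∈ {v | ∃ ξb : Fin 3 → ℝ, Feas ξb ∧ v = sSup (T ξb)} :=
    ⟨ξstar, ξstar_feas, T_star_eq.symm⟩
  have hlb : (1/2 : ℝ) ∈ lowerBounds {v | ∃ ξb : Fin 3 → ℝ, Feas ξb ∧ v = sSup (T ξb)} := by
    rintro v ⟨ξb, hb, rfl⟩; exact T_low hb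
  exact le_antisymm (csInf_le ⟨_, hlb⟩ hmem) (le_csInf ⟨_, hmem⟩ hlb)
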